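/- Let gcd(m,q)=1, R = F_q[x]/(x^m−λ), and let C ⊆ R² be generated by (g₁₁, g₁₂) and (0, g₂₂) with g₁₁, g₂₂ dividing x^m−λ, deg g₁₂ < deg g₂₂, and gcd(g₁₁, g₂₂) dividing g₁₂. If g₁₁(x) g₂₂(x) ≡ 0 (mod x^m − λ), then C is generated by a single element of R². -/
import Mathlib


open Polynomial

theorem keylem {F : Type*} [Field F] [DecidableEq F] (n g11 g12 g22 : F[X])
    (hn0 : n ≠ 0) (hsf : Squarefree n)
    (h11 : g11 ∣ n) (h22 : g22 ∣ n)
    (hgcd : EuclideanDomain.gcd g11 g22 ∣ g12)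
    (hzero : n ∣ g11 * g22) :
    ∃ r f : F[X], n ∣ f * g11 ∧ n ∣ f * (g12 + r * g22) - g22 := by
  set d := EuclideanDomain.gcd g11 g22 with hd
  have hg110 : g11 ≠ 0 := ne_zero_of_dvd_ne_zero hn0 h11
  obtain ⟨a, ha⟩ : d ∣ g11 := EuclideanDomain.gcd_dvd_left _ _
  obtain ⟨b, hb⟩ : d ∣ g22 := EuclideanDomain.gcd_dvd_right _ _
  -- a is coprime to g22
  have copag22 : IsCoprime a g22 := by
    rw [← EuclideanDomain.gcd_isUnit_iff]
    have h1 : EuclideanDomain.gcd a g22 ∣ d := by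
      apply EuclideanDomain.dvd_gcd
      · exact (EuclideanDomain.gcd_dvd_left a g22).trans ⟨d, by rw [ha]; ring⟩
      · exact EuclideanDomain.gcd_dvd_right a g22
    have h2 : EuclideanDomain.gcd a g22 * EuclideanDomain.gcd a g22 ∣ g11 := by
      rw [ha]
      exact mul_dvd_mul h1 (EuclideanDomain.gcd_dvd_left a g22)
    exact (hsf.squarefree_of_dvd h11) _ h2
  -- a * g22 ∣ n
  have hag22 : a * g22 ∣ n :=
    copag22.mul_dvd (dvd_trans ⟨d, by rw [ha]; ring⟩ h11) h22
  obtain ⟨w, hw⟩ := hag22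
  -- w is a unit
  have hwd : w ∣ d := by
    have h3 : a * g22 * w ∣ (a * g22) * d := by
      rw [← hw]; refine hzero.trans ⟨1, by rw [ha]; ring⟩
    have hag0 : a * g22 ≠ 0 := by
      intro h; apply hn0; rw [hw, h, zero_mul]
    exact (mul_dvd_mul_iff_left hag0).mp h3
  have hwu : IsUnit w := by
    obtain ⟨c, hc⟩ := hwd.trans ⟨b, hb⟩
    exact hsf w ⟨a * c, by rw [hw, hc]; ring⟩
  obtain ⟨winv, hwinv⟩ := hwu.exists_right_inv
  -- Bezout for a, g22
  obtain ⟨u, v, huv⟩ := copag22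
  refine ⟨v * (1 - g12), ?_⟩
  set G : F[X] := g12 + v * (1 - g12) * g22 with hG
  have hGform : G = 1 - a * (u * (1 - g12)) := by
    rw [hG]; linear_combination (1 - g12) * huv
  obtain ⟨g12', h12'⟩ := hgcd
  have hdG : d ∣ G := ⟨g12' + v * (1 - g12) * b, by rw [hG, h12', hb]; ring⟩
  obtain ⟨G2, hG2⟩ := hdG
  have copaG2 : IsCoprime a G2 := by
    have : IsCoprime a (d * G2) := ⟨u * (1 - g12), 1, by rw [← hG2, hGform]; ring⟩
    exact this.of_mul_right_right
  obtain ⟨p, q, hpq⟩ := copaG2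
  refine ⟨b * w * (winv * q), ⟨q * winv, ?_⟩, ⟨-(p * winv), ?_⟩⟩
  · rw [hw, ha, hb]; ring
  · rw [hw, hb, hG2]
    linear_combination (d * b * w * winv) * hpq + (d * b) * hwinv


set_option synthInstance.maxHeartbeats 1000000 in
set_option maxHeartbeats 2000000 in
/-- Suppose `gcd(m,q) = 1`, `g₁₁, g₂₂ ∣ x^m - λ`, `deg g₁₂ < deg g₂₂` and
`gcd(g₁₁,g₂₂) ∣ g₁₂`.  If `g₁₁ g₂₂ ≡ 0 (mod x^m - λ)`, then the submodule of `R²`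
(`R = F_q[x]/(x^m-λ)`) generated by `(g₁₁, g₁₂)` and `(0, g₂₂)` is generated by a
single element. -/
theorem stmt14 {F : Type*} [Field F] [Fintype F] [DecidableEq F] (m : ℕ) (hm : 0 < m)
    (hcop : Nat.Coprime m (Fintype.card F)) (lam : F) (hlam : lam ≠ 0)
    (g11 g12 g22 : F[X])
    (h11 : g11 ∣ X ^ m - C lam) (h22 : g22 ∣ X ^ m - C lam)
    (hdeg : g12.degree < g22.degree)
    (hgcd : EuclideanDomain.gcd g11 g22 ∣ g12)
    (hzero : (X ^ m - C lam) ∣ g11 * g22)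
    (mk : F[X] →+* F[X] ⧸ Ideal.span {X ^ m - C lam})
    (hmk : mk = Ideal.Quotient.mk (Ideal.span {X ^ m - C lam})) :
    ∃ v : (F[X] ⧸ Ideal.span {X ^ m - C lam}) × (F[X] ⧸ Ideal.span {X ^ m - C lam}),
      Submodule.span (F[X] ⧸ Ideal.span {X ^ m - C lam})
          ({(mk g11, mk g12), (0, mk g22)} :
            Set ((F[X] ⧸ Ideal.span {X ^ m - C lam}) × (F[X] ⧸ Ideal.span {X ^ m - C lam}))) =
        Submodule.span _ {v} := by
  have hn0 : (X ^ m - C lam) ≠ 0 := X_pow_sub_C_ne_zero hm lam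
  have hmF : (m : F) ≠ 0 := by
    intro h
    have h1 : ringChar F ∣ m := (CharP.cast_eq_zero_iff F (ringChar F) m).mp h
    have h2 : ringChar F ∣ Fintype.card F :=
      (CharP.cast_eq_zero_iff F (ringChar F) _).mp (FiniteField.cast_card_eq_zero F)
    have h3 := Nat.dvd_gcd h1 h2
    rw [Nat.Coprime] at hcop
    rw [hcop, Nat.dvd_one] at h3
    exact CharP.ringChar_ne_one h3
  have hsf : Squarefree (X ^ m - C lam) := (separable_X_pow_sub_C lam hmF hlam).squarefree
  obtain ⟨r, f, hf1, hf2⟩ := keylem (X ^ m - C lam) g11 g12 g22 hn0 hsf h11 h22 hgcd hzero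
  subst hmk
  set I : Ideal F[X] := Ideal.span {X ^ m - C lam} with hI
  set Q : F[X] →+* F[X] ⧸ I := Ideal.Quotient.mk I with hQ
  refine ⟨(Q g11, Q (g12 + r * g22)), ?_⟩
  have hv2 : ((0 : F[X] ⧸ I), Q g22) ∈
      Submodule.span (F[X] ⧸ I) {((Q g11, Q (g12 + r * g22)) : (F[X] ⧸ I) × (F[X] ⧸ I))} := by
    rw [Submodule.mem_span_singleton]
    refine ⟨Q f, ?_⟩
    have e1 : Q f * Q g11 = 0 := by
      rw [← map_mul, Ideal.Quotient.eq_zero_iff_mem, hI, Ideal.mem_span_singleton]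
      exact hf1
    have e2 : Q f * Q (g12 + r * g22) = Q g22 := by
      rw [← map_mul, Ideal.Quotient.eq, hI, Ideal.mem_span_singleton]
      exact hf2
    rw [Prod.smul_mk, Prod.mk.injEq, smul_eq_mul, smul_eq_mul]
    exact ⟨e1, e2⟩
  apply le_antisymm
  · rw [Submodule.span_le]
    rintro x hx
    simp only [Set.mem_insert_iff, Set.mem_singleton_iff] at hx
    rcases hx with rfl | rfl
    · have hv : ((Q g11, Q (g12 + r * g22)) : (F[X] ⧸ I) × (F[X] ⧸ I)) ∈
          Submodule.span (F[X] ⧸ I) {((Q g11, Q (g12 + r * g22)) : (F[X] ⧸ I) × (F[X] ⧸ I))} :=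
        Submodule.mem_span_singleton_self _
      have hmem := Submodule.sub_mem _ hv (Submodule.smul_mem _ (Q r) hv2)
      have heq : ((Q g11, Q (g12 + r * g22)) : (F[X] ⧸ I) × (F[X] ⧸ I)) -
          Q r • ((0 : F[X] ⧸ I), Q g22) = (Q g11, Q g12) := by
        rw [Prod.smul_mk, smul_eq_mul, smul_eq_mul, Prod.mk_sub_mk, mul_zero, sub_zero,
          map_add, map_mul]
        ring_nf
      rwa [heq] at hmem
    · exact hv2
  · rw [Submodule.span_le]
    rintro x hx
    simp only [Set.mem_singleton_iff] at hx
    subst hx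
    rw [SetLike.mem_coe, Submodule.mem_span_pair]
    refine ⟨1, Q r, ?_⟩
    rw [Prod.smul_mk, Prod.smul_mk, smul_eq_mul, smul_eq_mul, smul_eq_mul, smul_eq_mul,
      Prod.mk_add_mk, mul_zero, one_mul, one_mul, add_zero, map_add, map_mul]
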